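/- Let K be a field of characteristic p > 0, W a finite-dimensional K-vector space, R = K[α₁,α₂]/(α₁^p,α₂^p) with grading Rℓ, and D the corresponding divided-derivative algebra acting on W ⊗ R (trivially on W). Suppose F_ℓ ⊆ W ⊗ Rℓ (0 ≤ ℓ ≤ 2(p-1)) are subspaces with D₁·F_ℓ ⊆ F_{ℓ-1} for all ℓ ≥ 1, and suppose F_{2(p-1)} = W' ⊗ R^{2(p-1)} for a subspace W' ⊆ W with dim F₀ = dim W'. Then F_ℓ = W' ⊗ Rℓ for all 0 ≤ ℓ ≤ 2(p-1). -/
import Mathlib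


/-! Concrete model of W ⊗ R for R = K[α₁,α₂]/(α₁^p,α₂^p): elements of W ⊗ R are functions
(Fin p × Fin p) → W (the value at (i,j) is the W-coefficient of α₁^i α₂^j).  `truncDeriv₁`
and `truncDeriv₂` are the actions of ∂₁, ∂₂ (acting trivially on W), and `wedgeSub K W p ℓ W'`
is the subspace W' ⊗ Rℓ of elements supported in total degree ℓ with coefficients in W'. -/

/-- The operator id_W ⊗ ∂₁ on W ⊗ R. -/
noncomputable def truncDeriv₁ (K W : Type) [Field K] [AddCommGroup W] [Module K W]
    (p : ℕ) : ((Fin p × Fin p) → W) →ₗ[K] ((Fin p × Fin p) → W) where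
  toFun f q := if h : (q.1 : ℕ) + 1 < p then
      (((q.1 : ℕ) + 1 : ℕ) : K) • f (⟨(q.1 : ℕ) + 1, h⟩, q.2) else 0
  map_add' f g := by
    funext q
    by_cases h : (q.1 : ℕ) + 1 < p <;> simp [h, smul_add]
  map_smul' c f := by
    funext q
    by_cases h : (q.1 : ℕ) + 1 < p
    · simp only [Pi.smul_apply, RingHom.id_apply, dif_pos h]
      rw [smul_comm]
    · simp only [Pi.smul_apply, RingHom.id_apply, dif_neg h, smul_zero]

/-- The operator id_W ⊗ ∂₂ on W ⊗ R. -/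
noncomputable def truncDeriv₂ (K W : Type) [Field K] [AddCommGroup W] [Module K W]
    (p : ℕ) : ((Fin p × Fin p) → W) →ₗ[K] ((Fin p × Fin p) → W) where
  toFun f q := if h : (q.2 : ℕ) + 1 < p then
      (((q.2 : ℕ) + 1 : ℕ) : K) • f (q.1, ⟨(q.2 : ℕ) + 1, h⟩) else 0
  map_add' f g := by
    funext q
    by_cases h : (q.2 : ℕ) + 1 < p <;> simp [h, smul_add]
  map_smul' c f := by
    funext q
    by_cases h : (q.2 : ℕ) + 1 < p
    · simp only [Pi.smul_apply, RingHom.id_apply, dif_pos h]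
      rw [smul_comm]
    · simp only [Pi.smul_apply, RingHom.id_apply, dif_neg h, smul_zero]

/-- The subspace W' ⊗ Rℓ of W ⊗ R. -/
def wedgeSub (K W : Type) [Field K] [AddCommGroup W] [Module K W] (p ℓ : ℕ)
    (W' : Submodule K W) : Submodule K ((Fin p × Fin p) → W) :=
  Submodule.pi Set.univ
    (fun q : Fin p × Fin p =>
      if (q.1 : ℕ) + (q.2 : ℕ) = ℓ then W' else (⊥ : Submodule K W))

section auxlemmas
variable (K W : Type) [Field K] [AddCommGroup W] [Module K W] (p : ℕ)

lemma truncDeriv₁_apply' (f : (Fin p × Fin p) → W) (q : Fin p × Fin p) :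
    truncDeriv₁ K W p f q = if h : (q.1 : ℕ) + 1 < p then
      (((q.1 : ℕ) + 1 : ℕ) : K) • f (⟨(q.1 : ℕ) + 1, h⟩, q.2) else 0 := rfl

lemma truncDeriv₂_apply' (f : (Fin p × Fin p) → W) (q : Fin p × Fin p) :
    truncDeriv₂ K W p f q = if h : (q.2 : ℕ) + 1 < p then
      (((q.2 : ℕ) + 1 : ℕ) : K) • f (q.1, ⟨(q.2 : ℕ) + 1, h⟩) else 0 := rfl

lemma iter₁_eval (a : ℕ) (f : (Fin p × Fin p) → W) (q1 j : Fin p)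
    (h : (q1 : ℕ) + a < p) :
    ((truncDeriv₁ K W p)^[a] f) (q1, j)
      = ((((q1 : ℕ) + 1).ascFactorial a : ℕ) : K) • f (⟨(q1 : ℕ) + a, h⟩, j) := by
  induction a generalizing f with
  | zero => simp
  | succ a ih =>
    have h' : (q1 : ℕ) + a < p := by omega
    rw [Function.iterate_succ_apply, ih _ h', truncDeriv₁_apply']
    rw [dif_pos (show ((⟨(q1:ℕ)+a, h'⟩ : Fin p) : ℕ) + 1 < p by simpa using by omega)]
    rw [smul_smul, Nat.ascFactorial_succ]
    push_cast
    ring_nf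

lemma iter₂_eval (b : ℕ) (f : (Fin p × Fin p) → W) (i q2 : Fin p)
    (h : (q2 : ℕ) + b < p) :
    ((truncDeriv₂ K W p)^[b] f) (i, q2)
      = ((((q2 : ℕ) + 1).ascFactorial b : ℕ) : K) • f (i, ⟨(q2 : ℕ) + b, h⟩) := by
  induction b generalizing f with
  | zero => simp
  | succ b ih =>
    have h' : (q2 : ℕ) + b < p := by omega
    rw [Function.iterate_succ_apply, ih _ h', truncDeriv₂_apply']
    rw [dif_pos (show ((⟨(q2:ℕ)+b, h'⟩ : Fin p) : ℕ) + 1 < p by simpa using by omega)]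
    rw [smul_smul, Nat.ascFactorial_succ]
    push_cast
    ring_nf

lemma iter₁_zero (a : ℕ) (f : (Fin p × Fin p) → W) (q1 j : Fin p)
    (h : p ≤ (q1 : ℕ) + a) :
    ((truncDeriv₁ K W p)^[a] f) (q1, j) = 0 := by
  induction a generalizing q1 with
  | zero => exact absurd q1.isLt (by omega)
  | succ a ih =>
    rw [Function.iterate_succ_apply', truncDeriv₁_apply']
    split
    · rw [ih (⟨(q1:ℕ)+1, by assumption⟩) (by simpa using by omega), smul_zero]
    · rfl

lemma iter₂_zero (b : ℕ) (f : (Fin p × Fin p) → W) (i q2 : Fin p)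
    (h : p ≤ (q2 : ℕ) + b) :
    ((truncDeriv₂ K W p)^[b] f) (i, q2) = 0 := by
  induction b generalizing q2 with
  | zero => exact absurd q2.isLt (by omega)
  | succ b ih =>
    rw [Function.iterate_succ_apply', truncDeriv₂_apply']
    split
    · rw [ih (⟨(q2:ℕ)+1, by assumption⟩) (by simpa using by omega), smul_zero]
    · rfl

end auxlemmas

lemma cast_asc_ne_zero (K : Type) [Field K] (p : ℕ) [Fact p.Prime] [CharP K p]
    (s : ℕ) : ∀ a : ℕ, s + a < p → (((s + 1).ascFactorial a : ℕ) : K) ≠ 0 := by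
  intro a
  induction a with
  | zero => simp
  | succ a ih =>
    intro h
    rw [Nat.ascFactorial_succ, Nat.cast_mul]
    refine mul_ne_zero ?_ (ih (by omega))
    intro hc
    have hd : p ∣ (s + 1 + a) := (CharP.cast_eq_zero_iff K p _).mp hc
    have := Nat.le_of_dvd (by omega) hd
    omega

/-- Local-algebra core of Lemma 4: if F_ℓ ⊆ W ⊗ Rℓ satisfy D₁·F_ℓ ⊆ F_{ℓ-1},
F_{2(p-1)} = W' ⊗ R^{2(p-1)} and dim F₀ = dim W', then F_ℓ = W' ⊗ Rℓ for all ℓ. -/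
theorem stmt11 (K : Type) [Field K] (p : ℕ) [Fact p.Prime] [CharP K p]
    (W : Type) [AddCommGroup W] [Module K W] [FiniteDimensional K W]
    (W' : Submodule K W) (F : ℕ → Submodule K ((Fin p × Fin p) → W))
    (hF : ∀ ℓ : ℕ, ℓ ≤ 2 * (p - 1) → F ℓ ≤ wedgeSub K W p ℓ ⊤)
    (hD : ∀ ℓ : ℕ, 1 ≤ ℓ →
      (F ℓ).map (truncDeriv₁ K W p) ≤ F (ℓ - 1) ∧
      (F ℓ).map (truncDeriv₂ K W p) ≤ F (ℓ - 1))
    (htop : F (2 * (p - 1)) = wedgeSub K W p (2 * (p - 1)) W')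
    (hdim : Module.finrank K (F 0) = Module.finrank K W') :
    ∀ ℓ : ℕ, ℓ ≤ 2 * (p - 1) → F ℓ = wedgeSub K W p ℓ W' := by
  have hp : p.Prime := Fact.out
  have hp2 : 2 ≤ p := hp.two_le
  -- iterated derivative membership
  have mem_iter₁ : ∀ (a m : ℕ) (f : (Fin p × Fin p) → W),
      f ∈ F (m + a) → (truncDeriv₁ K W p)^[a] f ∈ F m := by
    intro a
    induction a with
    | zero => intro m f hf; simpa using hf
    | succ a ih =>
      intro m f hf
      rw [Function.iterate_succ_apply]
      refine ih m _ ?_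
      have h1 := (hD (m + a + 1) (by omega)).1 (Submodule.mem_map_of_mem
        (show f ∈ F (m + a + 1) from hf))
      simpa using h1
  have mem_iter₂ : ∀ (b m : ℕ) (f : (Fin p × Fin p) → W),
      f ∈ F (m + b) → (truncDeriv₂ K W p)^[b] f ∈ F m := by
    intro b
    induction b with
    | zero => intro m f hf; simpa using hf
    | succ b ih =>
      intro m f hf
      rw [Function.iterate_succ_apply]
      refine ih m _ ?_
      have h1 := (hD (m + b + 1) (by omega)).2 (Submodule.mem_map_of_mem
        (show f ∈ F (m + b + 1) from hf))
      simpa using h1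
  -- single-point elements with coefficient in W' belong to F
  have singleMem : ∀ (i j : Fin p) (w : W), w ∈ W' →
      (Pi.single (i, j) w : (Fin p × Fin p) → W) ∈ F ((i : ℕ) + (j : ℕ)) := by
    intro i j w hw
    have hi : (i : ℕ) < p := i.isLt
    have hj : (j : ℕ) < p := j.isLt
    set a : ℕ := p - 1 - (i : ℕ) with ha
    set b : ℕ := p - 1 - (j : ℕ) with hb
    set P : Fin p := ⟨p - 1, by omega⟩ with hP
    set S : (Fin p × Fin p) → W := Pi.single (P, P) w with hS
    have htopmem : S ∈ F (2 * (p - 1)) := by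
      rw [htop]
      simp only [wedgeSub, Submodule.mem_pi, Set.mem_univ, forall_true_left]
      intro q
      rcases eq_or_ne q (P, P) with rfl | hne
      · rw [hS, Pi.single_eq_same, if_pos (by simp [hP]; omega)]
        exact hw
      · rw [hS, Pi.single_eq_of_ne hne]
        split <;> simp
    have step1 : (truncDeriv₂ K W p)^[b] S ∈ F ((p - 1) + (j : ℕ)) := by
      refine mem_iter₂ b _ S ?_
      have : (p - 1) + (j : ℕ) + b = 2 * (p - 1) := by omega
      rwa [this]
    have step2 : (truncDeriv₁ K W p)^[a] ((truncDeriv₂ K W p)^[b] S)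
        ∈ F ((i : ℕ) + (j : ℕ)) := by
      refine mem_iter₁ a _ _ ?_
      have : (i : ℕ) + (j : ℕ) + a = (p - 1) + (j : ℕ) := by omega
      rwa [this]
    set c : K := ((((i : ℕ) + 1).ascFactorial a : ℕ) : K)
      * ((((j : ℕ) + 1).ascFactorial b : ℕ) : K) with hc
    have hcne : c ≠ 0 := mul_ne_zero
      (cast_asc_ne_zero K p _ a (by omega)) (cast_asc_ne_zero K p _ b (by omega))
    have hfun : (truncDeriv₁ K W p)^[a] ((truncDeriv₂ K W p)^[b] S)
        = c • (Pi.single (i, j) w : (Fin p × Fin p) → W) := by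
      funext q
      obtain ⟨q1, q2⟩ := q
      by_cases h1 : (q1 : ℕ) + a < p
      · rw [iter₁_eval K W p a _ q1 q2 h1]
        by_cases h2 : (q2 : ℕ) + b < p
        · rw [iter₂_eval K W p b S _ q2 h2]
          by_cases he : (q1 : ℕ) = (i : ℕ) ∧ (q2 : ℕ) = (j : ℕ)
          · have hq1 : q1 = i := Fin.ext he.1
            have hq2 : q2 = j := Fin.ext he.2
            subst hq1; subst hq2
            have e1 : (⟨(q1 : ℕ) + a, h1⟩ : Fin p) = P := by
              apply Fin.ext; simp [hP]; omega
            have e2 : (⟨(q2 : ℕ) + b, h2⟩ : Fin p) = P := by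
              apply Fin.ext; simp [hP]; omega
            rw [e1, e2, hS, Pi.single_eq_same]
            rw [show ((q1, q2) : Fin p × Fin p) = (q1, q2) from rfl]
            simp only [Pi.smul_apply, Pi.single_eq_same, hc, smul_smul]
          · have hne : ((⟨(q1 : ℕ) + a, h1⟩ : Fin p), (⟨(q2 : ℕ) + b, h2⟩ : Fin p))
                ≠ (P, P) := by
              intro hcon
              rw [Prod.mk.injEq] at hcon
              have e1 : (q1 : ℕ) + a = p - 1 := congrArg Fin.val hcon.1
              have e2 : (q2 : ℕ) + b = p - 1 := congrArg Fin.val hcon.2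
              exact he ⟨by omega, by omega⟩
            rw [hS, Pi.single_eq_of_ne hne, smul_zero, smul_zero]
            have hne' : ((q1, q2) : Fin p × Fin p) ≠ (i, j) := by
              intro hcon
              rw [Prod.mk.injEq] at hcon
              exact he ⟨congrArg Fin.val hcon.1, congrArg Fin.val hcon.2⟩
            rw [Pi.smul_apply, Pi.single_eq_of_ne hne', smul_zero]
        · rw [iter₂_zero K W p b S _ q2 (by omega), smul_zero]
          have hne' : ((q1, q2) : Fin p × Fin p) ≠ (i, j) := by
            intro hcon
            rw [Prod.mk.injEq] at hcon
            have := congrArg Fin.val hcon.2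
            omega
          rw [Pi.smul_apply, Pi.single_eq_of_ne hne', smul_zero]
      · rw [iter₁_zero K W p a _ q1 q2 (by omega)]
        have hne' : ((q1, q2) : Fin p × Fin p) ≠ (i, j) := by
          intro hcon
          rw [Prod.mk.injEq] at hcon
          have := congrArg Fin.val hcon.1
          omega
        rw [Pi.smul_apply, Pi.single_eq_of_ne hne', smul_zero]
    have : (Pi.single (i, j) w : (Fin p × Fin p) → W)
        = c⁻¹ • (truncDeriv₁ K W p)^[a] ((truncDeriv₂ K W p)^[b] S) := by
      rw [hfun, smul_smul, inv_mul_cancel₀ hcne, one_smul]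
    rw [this]
    exact Submodule.smul_mem _ _ step2
  -- wedgeSub ≤ F
  have wedge_le : ∀ ℓ : ℕ, ℓ ≤ 2 * (p - 1) → wedgeSub K W p ℓ W' ≤ F ℓ := by
    intro ℓ hℓ g hg
    have hrep : g = ∑ q : Fin p × Fin p, Pi.single q (g q) :=
      (Finset.univ_sum_single g).symm
    rw [hrep]
    refine Submodule.sum_mem _ ?_
    intro q _
    have hq : g q ∈ (if (q.1 : ℕ) + (q.2 : ℕ) = ℓ then W' else (⊥ : Submodule K W)) :=
      hg q (Set.mem_univ q)
    by_cases hd : (q.1 : ℕ) + (q.2 : ℕ) = ℓ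
    · rw [if_pos hd] at hq
      have := singleMem q.1 q.2 (g q) hq
      rw [hd] at this
      exact this
    · rw [if_neg hd] at hq
      rw [Submodule.mem_bot] at hq
      rw [hq, Pi.single_zero]
      exact zero_mem _
  -- F 0 = wedgeSub 0 W'
  have hppos : 0 < p := by omega
  set z : Fin p := ⟨0, hppos⟩ with hz
  have hF0 : F 0 = wedgeSub K W p 0 W' := by
    refine (Submodule.eq_of_le_of_finrank_le (wedge_le 0 (by omega)) ?_).symm
    rw [hdim]
    let L : W' →ₗ[K] ((Fin p × Fin p) → W) :=
      (LinearMap.single K (fun _ : Fin p × Fin p => W) (z, z)).comp W'.subtype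
    have hmem : ∀ w : W', L w ∈ wedgeSub K W p 0 W' := by
      intro w
      have : ∀ q ∈ Set.univ, L w q ∈ (fun q : Fin p × Fin p =>
          if (q.1 : ℕ) + (q.2 : ℕ) = 0 then W' else (⊥ : Submodule K W)) q := by
        intro q _
        have hLw : L w = Pi.single (z, z) (w : W) := rfl
        rcases eq_or_ne q (z, z) with rfl | hne
        · rw [hLw, Pi.single_eq_same]
          simp only [if_pos (show ((z,z).1 : ℕ) + ((z,z).2 : ℕ) = 0 by simp [hz])]
          exact w.2
        · rw [hLw, Pi.single_eq_of_ne hne]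
          exact zero_mem _
      exact Submodule.mem_pi.mpr this
    have hinj : Function.Injective (L.codRestrict (wedgeSub K W p 0 W') hmem) := by
      intro x y hxy
      have hLxy : L x = L y := congrArg Subtype.val hxy
      have hLx : L x = Pi.single (z, z) (x : W) := rfl
      have hLy : L y = Pi.single (z, z) (y : W) := rfl
      rw [hLx, hLy] at hLxy
      have hval := congrFun hLxy (z, z)
      rw [Pi.single_eq_same, Pi.single_eq_same] at hval
      exact Subtype.ext hval
    exact LinearMap.finrank_le_finrank_of_injective hinj
  -- main conclusion
  intro ℓ hℓ
  refine le_antisymm ?_ (wedge_le ℓ hℓ)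
  intro f hf
  have hsupp := Submodule.mem_pi.mp (hF ℓ hℓ hf)
  refine Submodule.mem_pi.mpr ?_
  intro q _
  by_cases hd : (q.1 : ℕ) + (q.2 : ℕ) = ℓ
  · simp only [if_pos hd]
    have hf' : f ∈ F ((q.1 : ℕ) + (q.2 : ℕ)) := by rwa [hd]
    have s1 : (truncDeriv₂ K W p)^[(q.2 : ℕ)] f ∈ F ((q.1 : ℕ)) :=
      mem_iter₂ _ _ _ hf'
    have s2 : (truncDeriv₁ K W p)^[(q.1 : ℕ)]
        ((truncDeriv₂ K W p)^[(q.2 : ℕ)] f) ∈ F 0 := by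
      refine mem_iter₁ _ _ _ ?_
      rwa [Nat.zero_add]
    rw [hF0] at s2
    have hval : ((truncDeriv₁ K W p)^[(q.1 : ℕ)]
        ((truncDeriv₂ K W p)^[(q.2 : ℕ)] f)) (z, z) ∈ W' := by
      have h3 := Submodule.mem_pi.mp s2 (z, z) (Set.mem_univ _)
      simpa [hz] using h3
    have hlt1 : (z : ℕ) + (q.1 : ℕ) < p := by simpa [hz] using q.1.isLt
    rw [iter₁_eval K W p _ _ z z hlt1] at hval
    have e1 : (⟨(z : ℕ) + (q.1 : ℕ), hlt1⟩ : Fin p) = q.1 := by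
      apply Fin.ext; simp [hz]
    rw [e1] at hval
    have hlt2 : (z : ℕ) + (q.2 : ℕ) < p := by simpa [hz] using q.2.isLt
    rw [iter₂_eval K W p _ _ q.1 z hlt2] at hval
    have e2 : (⟨(z : ℕ) + (q.2 : ℕ), hlt2⟩ : Fin p) = q.2 := by
      apply Fin.ext; simp [hz]
    rw [e2] at hval
    set c1 : K := ((((z : ℕ) + 1).ascFactorial (q.1 : ℕ) : ℕ) : K) with hc1def
    set c2 : K := ((((z : ℕ) + 1).ascFactorial (q.2 : ℕ) : ℕ) : K) with hc2def
    have hc1 : c1 ≠ 0 := cast_asc_ne_zero K p _ _ hlt1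
    have hc2 : c2 ≠ 0 := cast_asc_ne_zero K p _ _ hlt2
    have h2 := W'.smul_mem ((c1 * c2)⁻¹) hval
    rw [smul_smul, smul_smul, show (c1 * c2)⁻¹ * c1 * c2 = 1 by
      field_simp, one_smul] at h2
    exact h2
  · simp only [if_neg hd]
    have h3 := hsupp q (Set.mem_univ q)
    rwa [if_neg hd] at h3
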